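/- Let p be a prime and k > 0 an even integer. Then for any two integers r, s > 0, the rational number S_k(p^r)/p^r - S_k(p^s)/p^s lies in Z_{(p)}. -/

import Mathlib

lemma sum_range_mul_aux {M : Type*} [AddCommMonoid M] (f : ℕ → M) (a b : ℕ) :
    ∑ j ∈ Finset.range (a * b), f j =
      ∑ x ∈ Finset.range a, ∑ y ∈ Finset.range b, f (x * b + y) := by
  induction a with
  | zero => simp
  | succ a ih =>
      rw [Nat.succ_mul, Finset.sum_range_add, ih, Finset.sum_range_succ]

lemma power_sum_step (p k r : ℕ) (hp : p.Prime) (hk : Even k) (hr : 0 < r) :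
    ∃ z : ℤ, (∑ j ∈ Finset.range (p ^ (r + 1)), (j : ℚ) ^ k) / (p : ℚ) ^ (r + 1) -
      (∑ j ∈ Finset.range (p ^ r), (j : ℚ) ^ k) / (p : ℚ) ^ r = z := by
  have hp0 : (p : ℚ) ≠ 0 := Nat.cast_ne_zero.mpr hp.pos.ne'
  set n : ℕ := p ^ r with hn
  set A : ℕ → ℤ := fun j => ∑ x ∈ Finset.range p, (x : ℤ) ^ j with hA
  set B : ℕ → ℤ := fun j => ∑ y ∈ Finset.range n, (y : ℤ) ^ (k - j) with hB
  set c : ℕ → ℤ := fun m =>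
    (k.choose (m + 1) : ℤ) * (n : ℤ) ^ (m + 1) * A (m + 1) * B (m + 1) with hc
  -- the expansion
  have expand : ∑ j ∈ Finset.range (p ^ (r + 1)), (j : ℚ) ^ k
      = p * (∑ j ∈ Finset.range n, (j : ℚ) ^ k) + ∑ m ∈ Finset.range k, (c m : ℚ) := by
    have h1 : p ^ (r + 1) = p * n := by rw [hn, pow_succ']
    rw [h1, sum_range_mul_aux (fun j => (j : ℚ) ^ k) p n]
    have h2 : ∀ x ∈ Finset.range p, ∀ y ∈ Finset.range n,
        ((x * n + y : ℕ) : ℚ) ^ k =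
          ∑ m ∈ Finset.range (k + 1), ((x : ℚ) * n) ^ m * (y : ℚ) ^ (k - m) * k.choose m := by
      intro x _ y _
      push_cast
      rw [add_pow]
    rw [Finset.sum_congr rfl fun x hx => Finset.sum_congr rfl (h2 x hx)]
    rw [Finset.sum_congr rfl fun x (_ : x ∈ Finset.range p) => Finset.sum_comm, Finset.sum_comm]
    rw [Finset.sum_range_succ']
    have h0 : ∑ x ∈ Finset.range p, ∑ y ∈ Finset.range n,
        ((x : ℚ) * n) ^ 0 * (y : ℚ) ^ (k - 0) * (k.choose 0 : ℚ)
        = p * ∑ j ∈ Finset.range n, (j : ℚ) ^ k := by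
      simp [Finset.sum_const, mul_comm]
    rw [h0, add_comm]
    congr 1
    refine Finset.sum_congr rfl fun m _ => ?_
    have hcast : (c m : ℚ) = (k.choose (m + 1) : ℚ) * ((n : ℚ) ^ (m + 1) *
        ((∑ x ∈ Finset.range p, (x : ℚ) ^ (m + 1)) *
         (∑ y ∈ Finset.range n, (y : ℚ) ^ (k - (m + 1))))) := by
      rw [hc, hA, hB]; push_cast; ring
    rw [hcast, Finset.sum_mul_sum, Finset.mul_sum, Finset.mul_sum]
    refine Finset.sum_congr rfl fun x _ => ?_
    rw [Finset.mul_sum, Finset.mul_sum]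
    refine Finset.sum_congr rfl fun y _ => ?_
    ring
  -- the divisibility
  have hdvd : ∀ m ∈ Finset.range k, (p : ℤ) ^ (r + 1) ∣ c m := by
    intro m _
    rcases Nat.eq_zero_or_pos m with hm | hm
    · subst hm
      have hpA : (p : ℤ) ∣ (k : ℤ) * A 1 := by
        have hgauss : A 1 * 2 = (p : ℤ) * ((p - 1 : ℕ) : ℤ) := by
          rw [hA]
          simp only [pow_one]
          rw [← Nat.cast_sum]
          exact_mod_cast congrArg (Nat.cast : ℕ → ℤ) (Finset.sum_range_id_mul_two p)
        rcases hp.eq_two_or_odd' with h2 | hodd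
        · subst h2
          obtain ⟨t, ht⟩ := hk
          have h2k : (2 : ℤ) ∣ (k : ℤ) := ⟨t, by push_cast [ht]; ring⟩
          exact_mod_cast h2k.mul_right (A 1)
        · have hpd : (p : ℤ) ∣ A 1 * 2 := hgauss ▸ Dvd.intro _ rfl
          have hprime : Prime (p : ℤ) := Nat.prime_iff_prime_int.mp hp
          have hA1 : (p : ℤ) ∣ A 1 := by
            rcases hprime.dvd_mul.mp hpd with h | h
            · exact h
            · exfalso
              have hp2 : p ∣ 2 := by exact_mod_cast h
              have := (Nat.prime_dvd_prime_iff_eq hp Nat.prime_two).mp hp2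
              obtain ⟨t, ht⟩ := hodd
              omega
          exact hA1.mul_left _
      have hc0 : c 0 = ((k : ℤ) * A 1) * ((p : ℤ) ^ r * B 1) := by
        simp only [hc, hn, zero_add, Nat.choose_one_right, pow_one]
        push_cast
        ring
      obtain ⟨u, hu⟩ := hpA
      refine ⟨u * B 1, ?_⟩
      rw [hc0, hu]
      ring
    · have hpow : (p : ℤ) ^ (r + 1) ∣ (n : ℤ) ^ (m + 1) := by
        rw [hn]
        push_cast
        rw [← pow_mul]
        exact pow_dvd_pow _ (by nlinarith)
      exact ((hpow.mul_left _).mul_right _).mul_right _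
  obtain ⟨w, hw⟩ := Finset.dvd_sum hdvd
  refine ⟨w, ?_⟩
  have hsum : (∑ m ∈ Finset.range k, (c m : ℚ)) = (p : ℚ) ^ (r + 1) * w := by
    rw [← Int.cast_sum, hw]
    push_cast
    ring
  rw [expand, hsum]
  field_simp
  ring

/-- For a prime `p` and even `k > 0`, for all `r, s > 0` the rational number
`S_k(p^r)/p^r - S_k(p^s)/p^s` lies in `ℤ_{(p)}` (its denominator is prime
to `p`). -/
theorem power_sum_quotient_padic_integral (p k r s : ℕ) (hp : p.Prime)
    (hk : Even k) (hk0 : 0 < k) (hr : 0 < r) (hs : 0 < s) :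
    ¬ p ∣ ((∑ j ∈ Finset.range (p ^ r), (j : ℚ) ^ k) / (p : ℚ) ^ r -
            (∑ j ∈ Finset.range (p ^ s), (j : ℚ) ^ k) / (p : ℚ) ^ s).den := by
  have key : ∀ t : ℕ, 0 < t → ∃ z : ℤ,
      (∑ j ∈ Finset.range (p ^ t), (j : ℚ) ^ k) / (p : ℚ) ^ t -
        (∑ j ∈ Finset.range (p ^ 1), (j : ℚ) ^ k) / (p : ℚ) ^ 1 = z := by
    intro t ht
    induction t with
    | zero => omega
    | succ t ih =>
        rcases Nat.eq_zero_or_pos t with h0 | hpos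
        · subst h0; exact ⟨0, by norm_num⟩
        · obtain ⟨z1, hz1⟩ := ih hpos
          obtain ⟨z2, hz2⟩ := power_sum_step p k t hp hk hpos
          exact ⟨z2 + z1, by push_cast; linarith⟩
  obtain ⟨z1, hz1⟩ := key r hr
  obtain ⟨z2, hz2⟩ := key s hs
  have hdiff : (∑ j ∈ Finset.range (p ^ r), (j : ℚ) ^ k) / (p : ℚ) ^ r -
      (∑ j ∈ Finset.range (p ^ s), (j : ℚ) ^ k) / (p : ℚ) ^ s = ((z1 - z2 : ℤ) : ℚ) := by
    push_cast
    linarith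
  rw [hdiff, Rat.den_intCast]
  intro h
  exact hp.ne_one (Nat.dvd_one.mp h)
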